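/- arXiv:1701.06430 — 2 statements merged into one kernel-verified Lean document; each statement's English description precedes it below -/
import Mathlib

section
/- Suppose a family B of measurable subsets of [0,1]^d admits, for every δ ∈ (0,1), a δ-cover of cardinality at most (c_1 d^{c_2} δ^{-1})^{c_3 d}, where c_1 ≥ 1 and c_2, c_3 ≥ 0. Then for all n > c_3 d, the minimal dispersion satisfies disp_B(n,d) ≤ (c_3 d / n) [ log( c_1 d^{c_2 − 1} n / c_3 ) + 1 ]. -/
open MeasureTheory Set
open scoped ENNReal

attribute [local instance] Classical.propDecidable

section aux

variable {d : ℕ}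

private def cube (d : ℕ) : Set (Fin d → ℝ) := Set.univ.pi fun _ => Set.Icc (0:ℝ) 1

private lemma cube_meas : MeasurableSet (cube d) :=
  MeasurableSet.univ_pi fun _ => measurableSet_Icc

private lemma cube_vol : volume (cube d) = 1 := by
  rw [cube, volume_pi_pi]
  simp [Real.volume_Icc]

private lemma cube_infinite (hd : 1 ≤ d) : (cube d).Infinite := by
  have hinj : Set.InjOn (fun t : ℝ => fun _ : Fin d => t) (Set.Icc (0:ℝ) 1) := by
    intro a _ b _ hab
    have := congrFun hab ⟨0, hd⟩
    simpa using this
  have himg : ((fun t : ℝ => fun _ : Fin d => t) '' Set.Icc (0:ℝ) 1).Infinite :=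
    Set.Infinite.image hinj (Set.Icc_infinite (by norm_num))
  refine himg.mono ?_
  rintro _ ⟨t, ht, rfl⟩
  intro i _
  exact ht

/-- Counting lemma: if every point lies in at most `m` sets of `Δ`, then total volume ≤ m. -/
private lemma sum_vol_le (Δ : Finset (Set (Fin d → ℝ)))
    (hmeas : ∀ S ∈ Δ, MeasurableSet S ∧ S ⊆ cube d) (m : ℕ)
    (h : ∀ x, (Δ.filter fun S => x ∈ S).card ≤ m) :
    ∑ S ∈ Δ, volume S ≤ (m : ℝ≥0∞) := by
  have h1 : ∑ S ∈ Δ, volume S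
      = ∫⁻ x, ∑ S ∈ Δ, S.indicator (fun _ => (1:ℝ≥0∞)) x := by
    rw [lintegral_finset_sum _ (fun S hS => measurable_const.indicator (hmeas S hS).1)]
    refine Finset.sum_congr rfl fun S hS => ?_
    rw [lintegral_indicator_const (hmeas S hS).1, one_mul]
  rw [h1]
  have h2 : ∀ x, ∑ S ∈ Δ, S.indicator (fun _ => (1:ℝ≥0∞)) x
      ≤ (cube d).indicator (fun _ => (m:ℝ≥0∞)) x := by
    intro x
    by_cases hx : x ∈ cube d
    · rw [Set.indicator_of_mem hx]
      have : ∑ S ∈ Δ, S.indicator (fun _ => (1:ℝ≥0∞)) x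
          = ((Δ.filter fun S => x ∈ S).card : ℝ≥0∞) := by
        rw [← Finset.sum_boole]
        refine Finset.sum_congr rfl fun S _ => ?_
        by_cases hS : x ∈ S <;> simp [Set.indicator, hS]
      rw [this]
      exact_mod_cast Nat.cast_le.mpr (h x)
    · rw [Set.indicator_of_notMem hx]
      have : ∀ S ∈ Δ, S.indicator (fun _ => (1:ℝ≥0∞)) x = 0 := by
        intro S hS
        exact Set.indicator_of_notMem (fun hxS => hx ((hmeas S hS).2 hxS)) _
      simp [Finset.sum_congr rfl this]
  calc ∫⁻ x, ∑ S ∈ Δ, S.indicator (fun _ => (1:ℝ≥0∞)) x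
      ≤ ∫⁻ x, (cube d).indicator (fun _ => (m:ℝ≥0∞)) x := lintegral_mono h2
    _ = (m : ℝ≥0∞) * volume (cube d) := lintegral_indicator_const cube_meas _
    _ = (m : ℝ≥0∞) := by rw [cube_vol, mul_one]

/-- There is a point contained in more than `ε * |Δ|` of the sets. -/
private lemma exists_heavy (ε : ℝ) (hε0 : 0 ≤ ε) (Δ : Finset (Set (Fin d → ℝ)))
    (hmeas : ∀ S ∈ Δ, MeasurableSet S ∧ S ⊆ cube d)
    (hvol : ∀ S ∈ Δ, ENNReal.ofReal ε < volume S) (hne : Δ.Nonempty) :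
    ∃ x, ε * Δ.card < ((Δ.filter fun S => x ∈ S).card : ℝ) := by
  by_contra hcon
  push_neg at hcon
  set m : ℕ := Nat.floor (ε * Δ.card) with hm
  have hmle : ∀ x, (Δ.filter fun S => x ∈ S).card ≤ m := by
    intro x
    exact Nat.le_floor (hcon x)
  have hsum := sum_vol_le Δ hmeas m hmle
  -- pass to reals
  have hfin : ∀ S ∈ Δ, volume S ≠ ⊤ := by
    intro S hS
    have : volume S ≤ volume (cube d) := measure_mono (hmeas S hS).2
    rw [cube_vol] at this
    exact ne_top_of_le_ne_top (by norm_num) this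
  have hR : ∑ S ∈ Δ, (volume S).toReal ≤ (m : ℝ) := by
    rw [← ENNReal.toReal_sum hfin]
    exact ENNReal.toReal_mono (by simp) hsum
  have hgt : ε * Δ.card < ∑ S ∈ Δ, (volume S).toReal := by
    have : ∑ _S ∈ Δ, ε < ∑ S ∈ Δ, (volume S).toReal := by
      refine Finset.sum_lt_sum_of_nonempty hne fun S hS => ?_
      have h1 := hvol S hS
      have := ENNReal.toReal_strict_mono (hfin S hS) h1
      rwa [ENNReal.toReal_ofReal hε0] at this
    simpa [Finset.sum_const, mul_comm] using this
  have : ε * Δ.card < (m : ℝ) := lt_of_lt_of_le hgt hR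
  exact absurd this (not_lt.mpr (Nat.floor_le (by positivity)))

/-- Greedy step: some point removes at least an `ε` fraction. -/
private lemma greedy_step (ε : ℝ) (hε0 : 0 ≤ ε) (Δ : Finset (Set (Fin d → ℝ)))
    (hmeas : ∀ S ∈ Δ, MeasurableSet S ∧ S ⊆ cube d)
    (hvol : ∀ S ∈ Δ, ENNReal.ofReal ε < volume S) (hne : Δ.Nonempty) :
    ∃ x ∈ cube d, ((Δ.filter fun S => x ∉ S).card : ℝ) < (1 - ε) * Δ.card := by
  obtain ⟨x, hx⟩ := exists_heavy ε hε0 Δ hmeas hvol hne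
  have hpos : 0 < (Δ.filter fun S => x ∈ S).card := by
    rcases Nat.eq_zero_or_pos (Δ.filter fun S => x ∈ S).card with h0 | h
    · exfalso
      rw [h0] at hx
      simp only [Nat.cast_zero] at hx
      have : (0:ℝ) ≤ ε * Δ.card := by positivity
      linarith
    · exact h
  obtain ⟨S, hS⟩ := Finset.card_pos.mp hpos
  rw [Finset.mem_filter] at hS
  refine ⟨x, (hmeas S hS.1).2 hS.2, ?_⟩
  have hsplit := Finset.card_filter_add_card_filter_not (s := Δ) (fun S => x ∈ S)
  have : ((Δ.filter fun S => x ∉ S).card : ℝ)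
      = (Δ.card : ℝ) - ((Δ.filter fun S => x ∈ S).card : ℝ) := by
    have := congrArg (fun k : ℕ => (k : ℝ)) hsplit
    push_cast at this
    linarith
  rw [this]
  nlinarith [hx]

/-- Greedy iteration. -/
private lemma greedy (ε : ℝ) (hε0 : 0 ≤ ε) (hε1 : ε ≤ 1) (Γ₁ : Finset (Set (Fin d → ℝ)))
    (hmeas : ∀ S ∈ Γ₁, MeasurableSet S ∧ S ⊆ cube d)
    (hvol : ∀ S ∈ Γ₁, ENNReal.ofReal ε < volume S) :
    ∀ m : ℕ, ∃ T : Finset (Fin d → ℝ), ↑T ⊆ cube d ∧ T.card ≤ m ∧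
      (((Γ₁.filter fun S => ∀ x ∈ T, x ∉ S).card : ℝ) ≤ (Γ₁.card : ℝ) * (1 - ε) ^ m) := by
  intro m
  induction m with
  | zero =>
    refine ⟨∅, by simp, le_refl _, ?_⟩
    have : (Γ₁.filter fun S => ∀ x ∈ (∅ : Finset (Fin d → ℝ)), x ∉ S) = Γ₁ := by
      apply Finset.filter_true_of_mem
      intro S _ x hx
      simp at hx
    rw [this]
    simp
  | succ m ih =>
    obtain ⟨T, hTc, hTcard, hTbound⟩ := ih
    set Δ := Γ₁.filter fun S => ∀ x ∈ T, x ∉ S with hΔ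
    rcases Δ.eq_empty_or_nonempty with hΔe | hΔne
    · refine ⟨T, hTc, hTcard.trans (Nat.le_succ m), ?_⟩
      rw [← hΔ, hΔe]
      simp only [Finset.card_empty, Nat.cast_zero]
      exact mul_nonneg (by positivity) (pow_nonneg (by linarith) _)
    · have hΔmeas : ∀ S ∈ Δ, MeasurableSet S ∧ S ⊆ cube d := fun S hS =>
        hmeas S (Finset.mem_filter.mp hS).1
      have hΔvol : ∀ S ∈ Δ, ENNReal.ofReal ε < volume S := fun S hS =>
        hvol S (Finset.mem_filter.mp hS).1
      obtain ⟨x, hxc, hxlt⟩ := greedy_step ε hε0 Δ hΔmeas hΔvol hΔne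
      refine ⟨insert x T, ?_, ?_, ?_⟩
      · rw [Finset.coe_insert]
        exact Set.insert_subset hxc hTc
      · exact (Finset.card_insert_le x T).trans (Nat.succ_le_succ hTcard)
      · have hrem : (Γ₁.filter fun S => ∀ y ∈ insert x T, y ∉ S)
            = Δ.filter fun S => x ∉ S := by
          rw [hΔ, Finset.filter_filter]
          apply Finset.filter_congr
          intro S _
          simp only [Finset.forall_mem_insert]
          tauto
        rw [hrem]
        calc ((Δ.filter fun S => x ∉ S).card : ℝ)
            ≤ (1 - ε) * Δ.card := le_of_lt hxlt
          _ ≤ (1 - ε) * ((Γ₁.card : ℝ) * (1 - ε) ^ m) := by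
              apply mul_le_mul_of_nonneg_left hTbound (by linarith)
          _ = (Γ₁.card : ℝ) * (1 - ε) ^ (m + 1) := by ring

/-- Main hitting-set lemma. -/
private lemma hitting (n : ℕ) (hn : 1 ≤ n) (Γ : Finset (Set (Fin d → ℝ)))
    (hmeas : ∀ S ∈ Γ, MeasurableSet S ∧ S ⊆ cube d)
    (ε : ℝ) (hε0 : 0 ≤ ε) (hexp : (Γ.card : ℝ) ≤ Real.exp (ε * n)) :
    ∃ T : Finset (Fin d → ℝ), ↑T ⊆ cube d ∧ T.card ≤ n ∧
      ∀ S ∈ Γ, ENNReal.ofReal ε < volume S → ∃ x ∈ T, x ∈ S := by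
  set Γ₁ := Γ.filter fun S => ENNReal.ofReal ε < volume S with hΓ₁
  have hΓ₁meas : ∀ S ∈ Γ₁, MeasurableSet S ∧ S ⊆ cube d := fun S hS =>
    hmeas S (Finset.mem_filter.mp hS).1
  have hΓ₁vol : ∀ S ∈ Γ₁, ENNReal.ofReal ε < volume S := fun S hS =>
    (Finset.mem_filter.mp hS).2
  rcases le_or_gt 1 ε with h1 | h1
  · -- ε ≥ 1 : no sets have volume > ε
    refine ⟨∅, by simp, by simp, ?_⟩
    intro S hS hvol
    exfalso
    have : volume S ≤ 1 := by
      have := measure_mono (μ := volume) (hmeas S hS).2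
      rwa [cube_vol] at this
    have h2 : (1 : ℝ≥0∞) ≤ ENNReal.ofReal ε := by
      rw [← ENNReal.ofReal_one]
      exact ENNReal.ofReal_le_ofReal h1
    exact absurd (lt_of_le_of_lt (this.trans h2) hvol) (lt_irrefl _)
  · rcases eq_or_lt_of_le hε0 with hε0' | hε0'
    · -- ε = 0 : Γ has at most one set
      have hk1 : Γ.card ≤ 1 := by
        have : (Γ.card : ℝ) ≤ 1 := by
          rw [← hε0', zero_mul, Real.exp_zero] at hexp
          exact hexp
        exact_mod_cast this
      rcases Γ₁.eq_empty_or_nonempty with hΓe | ⟨S₀, hS₀⟩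
      · refine ⟨∅, by simp, by simp, ?_⟩
        intro S hS hvol
        exfalso
        have : S ∈ Γ₁ := Finset.mem_filter.mpr ⟨hS, hvol⟩
        rw [hΓe] at this
        simp at this
      · have hS₀vol := hΓ₁vol S₀ hS₀
        have : volume S₀ ≠ 0 := by
          intro h
          rw [h] at hS₀vol
          exact absurd hS₀vol (not_lt.mpr zero_le)
        obtain ⟨x, hx⟩ := nonempty_of_measure_ne_zero this
        refine ⟨{x}, ?_, by simpa using hn, ?_⟩
        · simp only [Finset.coe_singleton, Set.singleton_subset_iff]
          exact (hΓ₁meas S₀ hS₀).2 hx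
        · intro S hS hvol
          have hSmem : S ∈ Γ₁ := Finset.mem_filter.mpr ⟨hS, hvol⟩
          have hS₀mem : S₀ ∈ Γ := (Finset.mem_filter.mp hS₀).1
          have hSmem' : S ∈ Γ := (Finset.mem_filter.mp hSmem).1
          have : S = S₀ := Finset.card_le_one.mp hk1 S hSmem' S₀ hS₀mem
          exact ⟨x, Finset.mem_singleton_self x, this ▸ hx⟩
    · -- 0 < ε < 1
      obtain ⟨T, hTc, hTcard, hTbound⟩ := greedy ε hε0 (le_of_lt h1) Γ₁ hΓ₁meas hΓ₁vol n
      have hrem0 : (Γ₁.filter fun S => ∀ x ∈ T, x ∉ S) = ∅ := by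
        rcases Nat.eq_zero_or_pos Γ₁.card with hk0 | hkpos
        · have : Γ₁ = ∅ := Finset.card_eq_zero.mp hk0
          rw [this]; rfl
        · -- strict bound
          have hpowlt : (1 - ε) ^ n < Real.exp (-(ε * n)) := by
            have h2 : 1 - ε < Real.exp (-ε) := by
              have := Real.add_one_lt_exp (x := -ε) (by linarith)
              linarith
            calc (1 - ε) ^ n < Real.exp (-ε) ^ n := by
                  apply pow_lt_pow_left₀ h2 (by linarith)
                  omega
              _ = Real.exp (-(ε * n)) := by
                  rw [← Real.exp_nat_mul]
                  ring_nf
          have hcards : (Γ₁.card : ℝ) ≤ (Γ.card : ℝ) := by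
            exact_mod_cast Finset.card_filter_le Γ _
          have hfin : ((Γ₁.filter fun S => ∀ x ∈ T, x ∉ S).card : ℝ) < 1 := by
            calc ((Γ₁.filter fun S => ∀ x ∈ T, x ∉ S).card : ℝ)
                ≤ (Γ₁.card : ℝ) * (1 - ε) ^ n := hTbound
              _ < (Γ₁.card : ℝ) * Real.exp (-(ε * n)) := by
                  apply mul_lt_mul_of_pos_left hpowlt
                  exact_mod_cast hkpos
              _ ≤ Real.exp (ε * n) * Real.exp (-(ε * n)) := by
                  apply mul_le_mul_of_nonneg_right (hcards.trans hexp)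
                  positivity
              _ = 1 := by rw [← Real.exp_add]; simp
          have : (Γ₁.filter fun S => ∀ x ∈ T, x ∉ S).card = 0 := by
            exact_mod_cast Nat.lt_one_iff.mp (by exact_mod_cast hfin)
          exact Finset.card_eq_zero.mp this
      refine ⟨T, hTc, hTcard, ?_⟩
      intro S hS hvol
      have hSmem : S ∈ Γ₁ := Finset.mem_filter.mpr ⟨hS, hvol⟩
      by_contra hcon
      push_neg at hcon
      have : S ∈ Γ₁.filter fun S => ∀ x ∈ T, x ∉ S :=
        Finset.mem_filter.mpr ⟨hSmem, hcon⟩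
      rw [hrem0] at this
      simp at this

/-- Padding: extend a finset inside an infinite set to exact cardinality. -/
private lemma pad {α : Type*} {s : Set α} (hs : s.Infinite) (T : Finset α)
    (hT : ↑T ⊆ s) (n : ℕ) (hn : T.card ≤ n) :
    ∃ P : Finset α, T ⊆ P ∧ ↑P ⊆ s ∧ P.card = n := by
  classical
  have hdiff : (s \ ↑T).Infinite := hs.diff T.finite_toSet
  obtain ⟨E, hEsub, hEcard⟩ := hdiff.exists_subset_card_eq (n - T.card)
  refine ⟨T ∪ E, Finset.subset_union_left, ?_, ?_⟩
  · rw [Finset.coe_union]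
    exact Set.union_subset hT (hEsub.trans Set.diff_subset)
  · have hdisj : Disjoint T E := by
      rw [Finset.disjoint_left]
      intro a haT haE
      exact (hEsub haE).2 haT
    rw [Finset.card_union_of_disjoint hdisj, hEcard]
    omega

end aux

theorem stmt10 (d : ℕ) (hd : 1 ≤ d) (𝓑 : Set (Set (Fin d → ℝ)))
    (h𝓑 : ∀ B ∈ 𝓑, MeasurableSet B ∧ B ⊆ Set.univ.pi fun _ => Set.Icc (0:ℝ) 1)
    (c₁ c₂ c₃ : ℝ) (hc₁ : 1 ≤ c₁) (hc₂ : 0 ≤ c₂) (hc₃ : 0 ≤ c₃)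
    (hcov : ∀ δ ∈ Set.Ioo (0:ℝ) 1, ∃ Γ : Finset (Set (Fin d → ℝ)),
      ↑Γ ⊆ 𝓑 ∧
      (∀ B ∈ 𝓑, ∃ L ∈ Γ, ∃ U ∈ Γ, L ⊆ B ∧ B ⊆ U ∧
        volume (U \ L) ≤ ENNReal.ofReal δ) ∧
      (Γ.card : ℝ) ≤ (c₁ * (d : ℝ) ^ c₂ * δ⁻¹) ^ (c₃ * d))
    (n : ℕ) (hn : c₃ * d < n) :
    (⨅ P : {P : Finset (Fin d → ℝ) //
        P.card = n ∧ (↑P : Set (Fin d → ℝ)) ⊆ Set.univ.pi fun _ => Set.Icc (0:ℝ) 1},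
      ⨆ B ∈ 𝓑, ⨆ _ : Disjoint B ((P : Finset (Fin d → ℝ)) : Set (Fin d → ℝ)), volume B) ≤
      ENNReal.ofReal (c₃ * d / n *
        (Real.log (c₁ * (d : ℝ) ^ (c₂ - 1) * n / c₃) + 1)) := by
  classical
  have hdR : (1:ℝ) ≤ (d:ℝ) := by exact_mod_cast hd
  have hnpos : 0 < n := by
    by_contra h
    push_neg at h
    interval_cases n
    · simp at hn
      nlinarith
  have hn1 : 1 ≤ n := hnpos
  have hcube := cube_infinite (d := d) hd
  rcases eq_or_lt_of_le hc₃ with hc₃0 | hc₃pos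
  · -- c₃ = 0
    obtain ⟨Γ, hΓsub, hΓLU, hΓcard⟩ := hcov (1/2) (by norm_num)
    have hk1 : Γ.card ≤ 1 := by
      have : (Γ.card : ℝ) ≤ 1 := by
        rw [← hc₃0, zero_mul, Real.rpow_zero] at hΓcard
        exact hΓcard
      exact_mod_cast this
    have hΓmeas : ∀ S ∈ Γ, MeasurableSet S ∧ S ⊆ cube d := fun S hS => h𝓑 S (hΓsub hS)
    obtain ⟨T, hTc, hTcard, hThit⟩ := hitting n hn1 Γ hΓmeas 0 le_rfl
      (by rw [zero_mul, Real.exp_zero]; exact_mod_cast hk1)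
    obtain ⟨P, hTP, hPc, hPcard⟩ := pad hcube T hTc n (hTcard)
    refine le_trans (iInf_le _ ⟨P, hPcard, hPc⟩) ?_
    refine iSup₂_le fun B hB => iSup_le fun hdisj => ?_
    obtain ⟨L, hL, U, hU, hLB, hBU, hUL⟩ := hΓLU B hB
    have hLU : L = U := Finset.card_le_one.mp hk1 L hL U hU
    have hLvol : volume L = 0 := by
      by_contra h
      have hlt : ENNReal.ofReal (0:ℝ) < volume L := by
        simpa [pos_iff_ne_zero] using h
      obtain ⟨x, hxT, hxL⟩ := hThit L hL hlt
      exact Set.disjoint_left.mp hdisj (hLB hxL) (Finset.mem_coe.mpr (hTP hxT))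
    have : volume B ≤ volume U := measure_mono hBU
    rw [← hLU, hLvol] at this
    exact this.trans zero_le
  · -- c₃ > 0
    set δ : ℝ := c₃ * d / n with hδdef
    have hδpos : 0 < δ := by
      apply div_pos
      · exact mul_pos hc₃pos (by linarith)
      · exact_mod_cast hnpos
    have hδlt1 : δ < 1 := by
      rw [div_lt_one (by exact_mod_cast hnpos)]
      exact hn
    obtain ⟨Γ, hΓsub, hΓLU, hΓcard⟩ := hcov δ ⟨hδpos, hδlt1⟩
    have hΓmeas : ∀ S ∈ Γ, MeasurableSet S ∧ S ⊆ cube d := fun S hS => h𝓑 S (hΓsub hS)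
    set A : ℝ := c₁ * (d:ℝ) ^ c₂ * δ⁻¹ with hAdef
    have hA1 : 1 ≤ A := by
      have h1 : (1:ℝ) ≤ (d:ℝ) ^ c₂ := Real.one_le_rpow hdR hc₂
      have h2 : (1:ℝ) ≤ δ⁻¹ := by
        nlinarith [mul_inv_cancel₀ hδpos.ne', inv_pos.mpr hδpos,
          mul_nonneg (sub_nonneg.mpr hδlt1.le) (inv_pos.mpr hδpos).le]
      have h3 : 1 ≤ c₁ * (d:ℝ) ^ c₂ := by nlinarith
      rw [hAdef]
      nlinarith
    set kR : ℝ := max (Γ.card : ℝ) 1 with hkR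
    have hkR1 : 1 ≤ kR := le_max_right _ _
    set ε : ℝ := Real.log kR / n with hεdef
    have hε0 : 0 ≤ ε := div_nonneg (Real.log_nonneg hkR1) (by positivity)
    have hεn : ε * n = Real.log kR := by
      rw [hεdef, div_mul_cancel₀]
      exact_mod_cast hnpos.ne'
    have hexp : (Γ.card : ℝ) ≤ Real.exp (ε * n) := by
      rw [hεn, Real.exp_log (by linarith)]
      exact le_max_left _ _
    obtain ⟨T, hTc, hTcard, hThit⟩ := hitting n hn1 Γ hΓmeas ε hε0 hexp
    obtain ⟨P, hTP, hPc, hPcard⟩ := pad hcube T hTc n hTcard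
    refine le_trans (iInf_le _ ⟨P, hPcard, hPc⟩) ?_
    refine iSup₂_le fun B hB => iSup_le fun hdisj => ?_
    obtain ⟨L, hL, U, hU, hLB, hBU, hUL⟩ := hΓLU B hB
    have hLvol : volume L ≤ ENNReal.ofReal ε := by
      by_contra h
      push_neg at h
      obtain ⟨x, hxT, hxL⟩ := hThit L hL h
      exact Set.disjoint_left.mp hdisj (hLB hxL) (Finset.mem_coe.mpr (hTP hxT))
    have hvolB : volume B ≤ ENNReal.ofReal (ε + δ) := by
      calc volume B ≤ volume U := measure_mono hBU
        _ ≤ volume (L ∪ (U \ L)) := measure_mono (by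
            intro y hy
            by_cases h : y ∈ L
            · exact Or.inl h
            · exact Or.inr ⟨hy, h⟩)
        _ ≤ volume L + volume (U \ L) := measure_union_le _ _
        _ ≤ ENNReal.ofReal ε + ENNReal.ofReal δ := add_le_add hLvol hUL
        _ = ENNReal.ofReal (ε + δ) := (ENNReal.ofReal_add hε0 hδpos.le).symm
    refine hvolB.trans (ENNReal.ofReal_le_ofReal ?_)
    set X : ℝ := c₁ * (d:ℝ) ^ (c₂ - 1) * n / c₃ with hXdef
    have hdne : (d:ℝ) ≠ 0 := by positivity
    have hnne : (n:ℝ) ≠ 0 := by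
      exact_mod_cast hnpos.ne'
    have hAX : A = X := by
      rw [hXdef, hAdef, Real.rpow_sub_one hdne, hδdef]
      field_simp
    have hApos : (0:ℝ) < A := by linarith
    have hkRA : kR ≤ A ^ (c₃ * d) := by
      apply max_le hΓcard
      calc (1:ℝ) = A ^ (0:ℝ) := (Real.rpow_zero A).symm
        _ ≤ A ^ (c₃ * d) := Real.rpow_le_rpow_of_exponent_le hA1 (by positivity)
    have hlog : Real.log kR ≤ (c₃ * d) * Real.log X := by
      calc Real.log kR ≤ Real.log (A ^ (c₃ * d)) := by
            apply Real.log_le_log (by linarith) hkRA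
        _ = (c₃ * d) * Real.log A := Real.log_rpow hApos _
        _ = (c₃ * d) * Real.log X := by rw [hAX]
    have hεle : ε ≤ c₃ * d / n * Real.log X := by
      rw [hεdef]
      rw [div_le_iff₀ (by positivity : (0:ℝ) < (n:ℝ))]
      calc Real.log kR ≤ (c₃ * d) * Real.log X := hlog
        _ = c₃ * ↑d / ↑n * Real.log X * ↑n := by field_simp
    have hrhs : c₃ * ↑d / ↑n * (Real.log X + 1) = c₃ * ↑d / ↑n * Real.log X + δ := by
      rw [hδdef]; ring
    linarith
end

section
/- For the family B_per of periodic axis-parallel boxes in [0,1]^d and all n ≥ 2, the minimal dispersion satisfies disp_{B_per}(n,d) ≤ (4d/n) log(2n). -/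
open MeasureTheory Set

/-- The periodic interval `I(x,y)`. -/
noncomputable def periodicInterval (x y : ℝ) : Set ℝ :=
  if x < y then Set.Ioo x y else Set.Icc 0 1 \ Set.Icc y x

/-- The periodic axis-parallel box `∏_k I_k(x,y)`. -/
noncomputable def periodicBox {d : ℕ} (x y : Fin d → ℝ) : Set (Fin d → ℝ) :=
  Set.univ.pi fun k => periodicInterval (x k) (y k)

/-- The family of periodic axis-parallel boxes on `[0,1]^d`. -/
noncomputable def Bper (d : ℕ) : Set (Set (Fin d → ℝ)) :=
  {B | ∃ x y : Fin d → ℝ, (∀ k, x k ∈ Set.Icc (0:ℝ) 1) ∧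
    (∀ k, y k ∈ Set.Icc (0:ℝ) 1) ∧ B = periodicBox x y}

/-- length of the periodic interval -/
noncomputable def plen (x y : ℝ) : ℝ := if x < y then y - x else 1 - (x - y)


lemma plen_nonneg {x y : ℝ} (hx : x ∈ Icc (0:ℝ) 1) (hy : y ∈ Icc (0:ℝ) 1) :
    0 ≤ plen x y := by
  unfold plen; split <;> [linarith; (obtain ⟨hx0,hx1⟩ := hx; obtain ⟨hy0,hy1⟩ := hy; linarith)]

lemma plen_le_one {x y : ℝ} (hx : x ∈ Icc (0:ℝ) 1) (hy : y ∈ Icc (0:ℝ) 1) :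
    plen x y ≤ 1 := by
  unfold plen; split
  · obtain ⟨hx0,hx1⟩ := hx; obtain ⟨hy0,hy1⟩ := hy; linarith
  · push_neg at *; linarith [hx.1, hy.2]

lemma periodicInterval_subset {x y : ℝ} (hx : x ∈ Icc (0:ℝ) 1) (hy : y ∈ Icc (0:ℝ) 1) :
    periodicInterval x y ⊆ Icc 0 1 := by
  unfold periodicInterval; split
  · exact (Ioo_subset_Icc_self).trans (Icc_subset_Icc hx.1 hy.2)
  · exact diff_subset

lemma measurableSet_periodicInterval (x y : ℝ) : MeasurableSet (periodicInterval x y) := by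
  unfold periodicInterval; split
  · exact measurableSet_Ioo
  · exact measurableSet_Icc.diff measurableSet_Icc

lemma volume_periodicInterval {x y : ℝ} (hx : x ∈ Icc (0:ℝ) 1) (hy : y ∈ Icc (0:ℝ) 1) :
    volume (periodicInterval x y) = ENNReal.ofReal (plen x y) := by
  unfold periodicInterval plen; split
  case isTrue h => exact Real.volume_Ioo
  case isFalse h =>
    push_neg at h
    rw [measure_diff (Icc_subset_Icc hy.1 hx.2) measurableSet_Icc.nullMeasurableSet
        (by simp [Real.volume_Icc]),
      Real.volume_Icc, Real.volume_Icc, ← ENNReal.ofReal_sub _ (by linarith : (0:ℝ) ≤ x - y)]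
    ring_nf


lemma volume_periodicBox {d : ℕ} {x y : Fin d → ℝ} (hx : ∀ k, x k ∈ Icc (0:ℝ) 1)
    (hy : ∀ k, y k ∈ Icc (0:ℝ) 1) :
    volume (periodicBox x y) = ENNReal.ofReal (∏ k, plen (x k) (y k)) := by
  rw [periodicBox, volume_pi_pi, ENNReal.ofReal_prod_of_nonneg
    (fun k _ => plen_nonneg (hx k) (hy k))]
  exact Finset.prod_congr rfl fun k _ => volume_periodicInterval (hx k) (hy k)

lemma periodicBox_subset {d : ℕ} {x y : Fin d → ℝ} (hx : ∀ k, x k ∈ Icc (0:ℝ) 1)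
    (hy : ∀ k, y k ∈ Icc (0:ℝ) 1) :
    periodicBox x y ⊆ Set.univ.pi fun _ => Icc (0:ℝ) 1 :=
  Set.pi_mono fun k _ => periodicInterval_subset (hx k) (hy k)

lemma measurableSet_periodicBox {d : ℕ} (x y : Fin d → ℝ) :
    MeasurableSet (periodicBox x y) :=
  MeasurableSet.univ_pi fun k => measurableSet_periodicInterval _ _

/-- the product lower bound -/
lemma prod_sub_sum_le {ι : Type*} (s : Finset ι) (f g : ι → ℝ)
    (h0 : ∀ i ∈ s, 0 ≤ f i) (hfg : ∀ i ∈ s, f i ≤ g i) (hg1 : ∀ i ∈ s, g i ≤ 1) :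
    ∏ i ∈ s, g i - ∑ i ∈ s, (g i - f i) ≤ ∏ i ∈ s, f i := by
  induction s using Finset.cons_induction with
  | empty => simp
  | cons a s ha IH =>
    simp only [Finset.prod_cons, Finset.sum_cons]
    have IH' := IH (fun i hi => h0 i (Finset.mem_cons_of_mem hi))
      (fun i hi => hfg i (Finset.mem_cons_of_mem hi))
      (fun i hi => hg1 i (Finset.mem_cons_of_mem hi))
    have hfa : 0 ≤ f a := h0 a (Finset.mem_cons_self a s)
    have hfga : f a ≤ g a := hfg a (Finset.mem_cons_self a s)
    have hga : g a ≤ 1 := hg1 a (Finset.mem_cons_self a s)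
    have hpf : 0 ≤ ∏ i ∈ s, f i := Finset.prod_nonneg (fun i hi => h0 i (Finset.mem_cons_of_mem hi))
    have hpg1 : ∏ i ∈ s, g i ≤ 1 := Finset.prod_le_one
      (fun i hi => (h0 i (Finset.mem_cons_of_mem hi)).trans (hfg i (Finset.mem_cons_of_mem hi)))
      (fun i hi => hg1 i (Finset.mem_cons_of_mem hi))
    have hpg0 : 0 ≤ ∏ i ∈ s, g i := Finset.prod_nonneg
      (fun i hi => (h0 i (Finset.mem_cons_of_mem hi)).trans (hfg i (Finset.mem_cons_of_mem hi)))
    have hs0 : 0 ≤ ∑ i ∈ s, (g i - f i) := Finset.sum_nonneg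
      (fun i hi => by linarith [hfg i (Finset.mem_cons_of_mem hi)])
    nlinarith [mul_le_mul_of_nonneg_left IH' hfa]

/-- per-coordinate shrink-to-grid lemma -/
lemma shrink (m : ℕ) (hm : 0 < m) {x y : ℝ} (hx : x ∈ Icc (0:ℝ) 1) (hy : y ∈ Icc (0:ℝ) 1)
    (hlen : 2/(m:ℝ) < plen x y) :
    ∃ a b : ℕ, a ≤ m ∧ b ≤ m ∧
      periodicInterval ((a:ℝ)/m) ((b:ℝ)/m) ⊆ periodicInterval x y ∧
      (a:ℝ)/m ∈ Icc (0:ℝ) 1 ∧ (b:ℝ)/m ∈ Icc (0:ℝ) 1 ∧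
      plen ((a:ℝ)/m) ((b:ℝ)/m) ≤ plen x y ∧
      plen x y - 2/(m:ℝ) ≤ plen ((a:ℝ)/m) ((b:ℝ)/m) := by
  have hm' : (0:ℝ) < m := Nat.cast_pos.mpr hm
  obtain ⟨hx0, hx1⟩ := hx
  obtain ⟨hy0, hy1⟩ := hy
  set a : ℕ := ⌈(m:ℝ) * x⌉₊ with ha
  set b : ℕ := ⌊(m:ℝ) * y⌋₊ with hb
  have hxa : x ≤ (a:ℝ)/m := by
    rw [le_div_iff₀ hm', mul_comm]; exact Nat.le_ceil _
  have hxa' : (a:ℝ)/m < x + 1/m := by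
    rw [div_lt_iff₀ hm']
    calc ((a:ℝ)) < (m:ℝ)*x + 1 := Nat.ceil_lt_add_one (by positivity)
    _ = (x + 1/m) * m := by field_simp
  have hyb : (b:ℝ)/m ≤ y := by
    rw [div_le_iff₀ hm', mul_comm]; exact Nat.floor_le (by positivity)
  have hyb' : y - 1/m < (b:ℝ)/m := by
    rw [lt_div_iff₀ hm']
    have h1 : (m:ℝ)*y < (b:ℝ) + 1 := Nat.lt_floor_add_one _
    have h2 : (y - 1/(m:ℝ)) * m = (m:ℝ)*y - 1 := by field_simp
    linarith
  have ham : a ≤ m := by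
    have : ((m:ℝ)*x) ≤ (m:ℝ) := by nlinarith
    calc a = ⌈(m:ℝ)*x⌉₊ := rfl
    _ ≤ ⌈(m:ℝ)⌉₊ := Nat.ceil_le_ceil this
    _ = m := Nat.ceil_natCast m
  have hbm : b ≤ m := by
    have h1 : ((m:ℝ)*y) ≤ (m:ℝ) := by nlinarith
    calc b = ⌊(m:ℝ)*y⌋₊ := rfl
    _ ≤ ⌊(m:ℝ)⌋₊ := Nat.floor_le_floor h1
    _ = m := Nat.floor_natCast m
  have hamem : (a:ℝ)/m ∈ Icc (0:ℝ) 1 := by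
    constructor
    · positivity
    · rw [div_le_one hm']; exact_mod_cast ham
  have hbmem : (b:ℝ)/m ∈ Icc (0:ℝ) 1 := by
    constructor
    · positivity
    · rw [div_le_one hm']; exact_mod_cast hbm
  refine ⟨a, b, ham, hbm, ?_, hamem, hbmem, ?_, ?_⟩
  · unfold periodicInterval
    by_cases hxy : x < y
    · rw [if_pos hxy]
      have hl : plen x y = y - x := if_pos hxy
      have hab : (a:ℝ)/m < (b:ℝ)/m := by
        rw [hl] at hlen
        have : (2:ℝ)/m = 1/m + 1/m := by ring
        linarith
      rw [if_pos hab]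
      exact Ioo_subset_Ioo hxa hyb
    · rw [if_neg hxy]
      push_neg at hxy
      have hab : ¬ ((a:ℝ)/m < (b:ℝ)/m) := by push_neg; linarith
      rw [if_neg hab]
      exact diff_subset_diff_right (Icc_subset_Icc hyb hxa)
  · unfold plen
    by_cases hxy : x < y
    · have hl : plen x y = y - x := if_pos hxy
      have hab : (a:ℝ)/m < (b:ℝ)/m := by
        rw [hl] at hlen
        have : (2:ℝ)/m = 1/m + 1/m := by ring
        linarith
      rw [if_pos hxy, if_pos hab]
      linarith
    · push_neg at hxy
      rw [if_neg (by push_neg; linarith : ¬ x < y)]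
      have hab : ¬ ((a:ℝ)/m < (b:ℝ)/m) := by push_neg; linarith
      rw [if_neg hab]; linarith
  · unfold plen
    by_cases hxy : x < y
    · rw [if_pos hxy]
      have hl : plen x y = y - x := if_pos hxy
      have hab : (a:ℝ)/m < (b:ℝ)/m := by
        rw [hl] at hlen
        have : (2:ℝ)/m = 1/m + 1/m := by ring
        linarith
      rw [if_pos hab]
      have : (2:ℝ)/m = 1/m + 1/m := by ring
      linarith
    · push_neg at hxy
      rw [if_neg (by push_neg; linarith : ¬ x < y)]
      have hab : ¬ ((a:ℝ)/m < (b:ℝ)/m) := by push_neg; linarith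
      rw [if_neg hab]
      have : (2:ℝ)/m = 1/m + 1/m := by ring
      linarith

lemma log_two_n_gt_one {n : ℕ} (hn : 2 ≤ n) : 1 < Real.log (2*n) := by
  have h2n : (4:ℝ) ≤ 2*n := by
    have : (2:ℝ) ≤ n := by exact_mod_cast hn
    linarith
  rw [Real.lt_log_iff_exp_lt (by linarith)]
  calc Real.exp 1 < 2.7182818286 := Real.exp_one_lt_d9
  _ ≤ 4 := by norm_num
  _ ≤ 2*n := h2n

lemma numeric_bound (d n m : ℕ) (hd : 1 ≤ d) (hn : 2 ≤ n) (δ : ℝ)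
    (hδdef : δ = 2*d*Real.log (2*n)/n) (hδ2 : δ < 1/2)
    (hm : m = ⌈2*(d:ℝ)/δ⌉₊) :
    ((m:ℝ)+1)^(2*d) * (1-δ)^n < 1 := by
  have hL : 1 < Real.log (2*n) := log_two_n_gt_one hn
  have hd' : (1:ℝ) ≤ d := by exact_mod_cast hd
  have hn' : (2:ℝ) ≤ n := by exact_mod_cast hn
  have hn0 : (0:ℝ) < n := by linarith
  have hδ0 : 0 < δ := by rw [hδdef]; positivity
  have hmge : 2*(d:ℝ)/δ ≤ m := by rw [hm]; exact Nat.le_ceil _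
  have hm1 : (m:ℝ)+1 ≤ 4*d/δ := by
    have h1 : (m:ℝ) < 2*d/δ + 1 := by rw [hm]; exact Nat.ceil_lt_add_one (by positivity)
    have h2 : (2:ℝ) ≤ 2*d/δ := by
      rw [le_div_iff₀ hδ0]; nlinarith
    have : 2*(d:ℝ)/δ + 2*d/δ = 4*d/δ := by ring
    linarith
  have h1δ : (0:ℝ) ≤ 1 - δ := by linarith
  have step1 : (1-δ)^n ≤ Real.exp (-δ)^n :=
    pow_le_pow_left₀ h1δ (by linarith [Real.add_one_le_exp (-δ)]) n
  have hnδ : (n:ℝ) * δ = 2*d*Real.log (2*n) := by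
    rw [hδdef]; field_simp
  have step2 : Real.exp (-δ)^n = ((2*(n:ℝ))^(2*d))⁻¹ := by
    rw [← Real.exp_nat_mul]
    have : (n:ℝ) * (-δ) = -((2*d:ℕ) * Real.log (2*n)) := by push_cast; linarith [hnδ]
    rw [this, Real.exp_neg, Real.exp_nat_mul, Real.exp_log (by linarith)]
  have hKnn : (0:ℝ) ≤ (m:ℝ)+1 := by positivity
  have stepK : ((m:ℝ)+1)^(2*d) ≤ (4*d/δ)^(2*d) := pow_le_pow_left₀ hKnn hm1 _
  have hpow_pos : (0:ℝ) < (2*(n:ℝ))^(2*d) := by positivity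
  calc ((m:ℝ)+1)^(2*d) * (1-δ)^n
      ≤ (4*d/δ)^(2*d) * ((2*(n:ℝ))^(2*d))⁻¹ := by
        apply mul_le_mul stepK (step1.trans_eq step2) (by positivity) (by positivity)
  _ = ((4*d/δ)/(2*n))^(2*d) := by
        rw [← div_eq_mul_inv, ← div_pow]
  _ = (1/Real.log (2*n))^(2*d) := by
        congr 1
        rw [div_div, eq_div_iff (by positivity)]
        field_simp
        nlinarith [hnδ]
  _ < 1 := by
        apply pow_lt_one₀ (by positivity) _ (by omega)
        rw [div_lt_one (by linarith)]; linarith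

lemma volume_cube (d : ℕ) : volume (Set.univ.pi fun _ : Fin d => Icc (0:ℝ) 1) = 1 := by
  rw [volume_pi_pi]
  simp [Real.volume_Icc]

lemma exists_hitting (d n m : ℕ) (hm : 0 < m) (δ : ℝ) (hδ0 : 0 ≤ δ) (hδ1 : δ ≤ 1)
    (hcard : (Fintype.card ((Fin d → Fin (m+1)) × (Fin d → Fin (m+1))) : ENNReal)
        * ENNReal.ofReal ((1-δ)^n) < 1) :
    ∃ ω : Fin n → (Fin d → ℝ), (∀ i, ω i ∈ Set.univ.pi fun _ : Fin d => Icc (0:ℝ) 1) ∧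
      ∀ a b : Fin d → Fin (m+1),
        ENNReal.ofReal δ ≤ volume (periodicBox (fun k => ((a k : ℕ):ℝ)/m)
          (fun k => ((b k : ℕ):ℝ)/m)) →
        ∃ i, ω i ∈ periodicBox (fun k => ((a k:ℕ):ℝ)/m) (fun k => ((b k:ℕ):ℝ)/m) := by
  classical
  set cube : Set (Fin d → ℝ) := Set.univ.pi fun _ : Fin d => Icc (0:ℝ) 1 with hcube
  have hm' : (0:ℝ) < m := Nat.cast_pos.mpr hm
  have hmemIcc : ∀ (a : Fin (m+1)), ((a:ℕ):ℝ)/m ∈ Icc (0:ℝ) 1 := by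
    intro a
    constructor
    · positivity
    · rw [div_le_one hm']
      have : (a:ℕ) ≤ m := Nat.lt_succ_iff.mp a.isLt
      exact_mod_cast this
  set ι := ((Fin d → Fin (m+1)) × (Fin d → Fin (m+1)))
  set boxOf : ι → Set (Fin d → ℝ) :=
    fun p => periodicBox (fun k => ((p.1 k : ℕ):ℝ)/m) (fun k => ((p.2 k : ℕ):ℝ)/m) with hboxOf
  set cubeN : Set (Fin n → Fin d → ℝ) := Set.univ.pi fun _ : Fin n => cube with hcubeN
  have hvolcube : volume cube = 1 := volume_cube d
  have hvolcubeN : volume cubeN = 1 := by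
    rw [hcubeN, volume_pi_pi]
    simp [hvolcube]
  set bad : Set (Fin n → Fin d → ℝ) :=
    ⋃ (p : ι) (_ : ENNReal.ofReal δ ≤ volume (boxOf p)),
      Set.univ.pi fun _ : Fin n => cube \ boxOf p with hbad
  have hboxsub : ∀ p : ι, boxOf p ⊆ cube := fun p =>
    periodicBox_subset (fun k => hmemIcc _) (fun k => hmemIcc _)
  have hbadp : ∀ p : ι, ENNReal.ofReal δ ≤ volume (boxOf p) →
      volume (Set.univ.pi fun _ : Fin n => cube \ boxOf p) ≤ ENNReal.ofReal ((1-δ)^n) := by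
    intro p hp
    have hdiff : volume (cube \ boxOf p) ≤ ENNReal.ofReal (1-δ) := by
      rw [measure_diff (hboxsub p) (measurableSet_periodicBox _ _).nullMeasurableSet
        (by
          refine ne_of_lt (lt_of_le_of_lt (measure_mono (hboxsub p)) ?_)
          rw [hvolcube]; exact ENNReal.one_lt_top),
        hvolcube]
      calc (1:ENNReal) - volume (boxOf p) ≤ 1 - ENNReal.ofReal δ := tsub_le_tsub_left hp 1
      _ = ENNReal.ofReal (1-δ) := by
          rw [ENNReal.ofReal_sub _ hδ0, ENNReal.ofReal_one]
    rw [volume_pi_pi]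
    calc ∏ i : Fin n, volume (cube \ boxOf p)
        ≤ ∏ i : Fin n, ENNReal.ofReal (1-δ) :=
          Finset.prod_le_prod' (fun i _ => hdiff)
    _ = ENNReal.ofReal (1-δ) ^ n := by rw [Finset.prod_const, Finset.card_univ, Fintype.card_fin]
    _ = ENNReal.ofReal ((1-δ)^n) := (ENNReal.ofReal_pow (by linarith) n).symm
  have hbadvol : volume bad < 1 := by
    calc volume bad ≤ ∑' p : ι, volume (⋃ (_ : ENNReal.ofReal δ ≤ volume (boxOf p)),
          Set.univ.pi fun _ : Fin n => cube \ boxOf p) := measure_iUnion_le _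
    _ ≤ ∑' p : ι, ENNReal.ofReal ((1-δ)^n) := by
        apply ENNReal.tsum_le_tsum
        intro p
        by_cases hp : ENNReal.ofReal δ ≤ volume (boxOf p)
        · rw [Set.iUnion_eq_if, if_pos hp]; exact hbadp p hp
        · rw [Set.iUnion_eq_if, if_neg hp]; simp
    _ = (Fintype.card ι : ENNReal) * ENNReal.ofReal ((1-δ)^n) := by
        rw [tsum_fintype, Finset.sum_const, Finset.card_univ, nsmul_eq_mul]
    _ < 1 := hcard
  have hne : (cubeN \ bad).Nonempty := by
    rw [Set.nonempty_iff_ne_empty]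
    intro hemp
    have hsub : cubeN ⊆ bad := by
      intro ω hω
      by_contra hωb
      exact (Set.eq_empty_iff_forall_notMem.mp hemp ω) ⟨hω, hωb⟩
    have := measure_mono (μ := volume) hsub
    rw [hvolcubeN] at this
    exact absurd (this.trans_lt hbadvol) (lt_irrefl _)
  obtain ⟨ω, hωcube, hωbad⟩ := hne
  refine ⟨ω, fun i => hωcube i (Set.mem_univ i), ?_⟩
  intro a b hab
  by_contra hmiss
  push_neg at hmiss
  apply hωbad
  rw [hbad]
  apply Set.mem_iUnion.mpr
  refine ⟨(a,b), Set.mem_iUnion.mpr ⟨hab, ?_⟩⟩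
  intro i _
  exact ⟨hωcube i (Set.mem_univ i), hmiss i⟩

lemma cube_infinite_s11 (d : ℕ) (hd : 1 ≤ d) :
    (Set.univ.pi fun _ : Fin d => Icc (0:ℝ) 1).Infinite := by
  have h01 : (Icc (0:ℝ) 1).Infinite := Set.Icc_infinite (by norm_num : (0:ℝ)<1)
  have himg : ((fun (t:ℝ) => (fun _ : Fin d => t)) '' (Icc (0:ℝ) 1)).Infinite :=
    h01.image (fun t _ t' _ h => congrFun h ⟨0, hd⟩)
  apply himg.mono
  rintro _ ⟨t, ht, rfl⟩
  exact fun k _ => ht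

lemma extend_finset (d n : ℕ) (hd : 1 ≤ d) (hn : 1 ≤ n) (s : Finset (Fin d → ℝ))
    (hs : ↑s ⊆ Set.univ.pi fun _ : Fin d => Icc (0:ℝ) 1) (hcard : s.card ≤ n) :
    ∃ P : Finset (Fin d → ℝ), P.card = n ∧
      (↑P : Set (Fin d → ℝ)) ⊆ (Set.univ.pi fun _ : Fin d => Icc (0:ℝ) 1) ∧ s ⊆ P := by
  classical
  obtain ⟨s', hss', hs'c, hs'n⟩ := (cube_infinite_s11 d hd).exists_superset_ncard_eq hs
    s.finite_toSet (k := n) (by rwa [Set.ncard_coe_finset])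
  have hfin : s'.Finite := by
    apply Set.finite_of_ncard_ne_zero
    omega
  refine ⟨hfin.toFinset, ?_, ?_, ?_⟩
  · rw [← Set.ncard_eq_toFinset_card s' hfin]
    exact hs'n
  · intro z hz
    apply hs'c
    simpa using hz
  · intro z hz
    simp only [Set.Finite.mem_toFinset]
    exact hss' (by simpa using hz)


theorem stmt11 (d : ℕ) (hd : 1 ≤ d) (n : ℕ) (hn : 2 ≤ n) :
    (⨅ P : {P : Finset (Fin d → ℝ) //
        P.card = n ∧ (↑P : Set (Fin d → ℝ)) ⊆ Set.univ.pi fun _ => Set.Icc (0:ℝ) 1},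
      ⨆ B ∈ Bper d, ⨆ _ : Disjoint B ((P : Finset (Fin d → ℝ)) : Set (Fin d → ℝ)),
        volume B) ≤
      ENNReal.ofReal (4 * d / n * Real.log (2 * n)) := by
  classical
  have hd' : (1:ℝ) ≤ d := by exact_mod_cast hd
  have hn' : (2:ℝ) ≤ n := by exact_mod_cast hn
  have hn0 : (0:ℝ) < n := by linarith
  have hL : 1 < Real.log (2*n) := log_two_n_gt_one hn
  set δ : ℝ := 2*d*Real.log (2*n)/n with hδdef
  have hδ0 : 0 < δ := by rw [hδdef]; positivity
  have hεδ : 4 * (d:ℝ) / n * Real.log (2 * n) = 2*δ := by rw [hδdef]; ring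
  rw [hεδ]
  by_cases hcase : 1 ≤ 2*δ
  · -- trivial case
    obtain ⟨P, hPcard, hPsub, -⟩ := extend_finset d n hd (by omega) ∅ (by simp) (by simp)
    refine le_trans (iInf_le _ ⟨P, hPcard, hPsub⟩) ?_
    apply iSup₂_le
    rintro B ⟨x, y, hx, hy, rfl⟩
    apply iSup_le
    intro _
    calc volume (periodicBox x y) ≤ volume (Set.univ.pi fun _ : Fin d => Icc (0:ℝ) 1) :=
          measure_mono (periodicBox_subset hx hy)
    _ = 1 := volume_cube d
    _ ≤ ENNReal.ofReal (2*δ) := ENNReal.one_le_ofReal.mpr hcase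
  · -- main case
    push_neg at hcase
    have hδhalf : δ < 1/2 := by linarith
    set m : ℕ := ⌈2*(d:ℝ)/δ⌉₊ with hmdef
    have hm0 : 0 < m := Nat.ceil_pos.mpr (by positivity)
    have hm' : (0:ℝ) < m := Nat.cast_pos.mpr hm0
    have hmge : 2*(d:ℝ)/δ ≤ m := Nat.le_ceil _
    have hmδ : 2*(d:ℝ)/m ≤ δ := by
      rw [div_le_iff₀ hm']
      rw [div_le_iff₀ hδ0] at hmge
      linarith
    have hnum : ((m:ℝ)+1)^(2*d) * (1-δ)^n < 1 :=
      numeric_bound d n m hd hn δ hδdef hδhalf hmdef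
    have hcard : (Fintype.card ((Fin d → Fin (m+1)) × (Fin d → Fin (m+1))) : ENNReal)
        * ENNReal.ofReal ((1-δ)^n) < 1 := by
      have hcardval : (Fintype.card ((Fin d → Fin (m+1)) × (Fin d → Fin (m+1))) : ℝ)
          = ((m:ℝ)+1)^(2*d) := by
        simp [Fintype.card_prod, Fintype.card_fun, Fintype.card_fin]
        push_cast
        ring
      rw [← ENNReal.ofReal_natCast, ← ENNReal.ofReal_mul (by positivity),
        ← ENNReal.ofReal_one]
      rw [ENNReal.ofReal_lt_ofReal_iff (by norm_num : (0:ℝ) < 1), hcardval]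
      exact hnum
    obtain ⟨ω, hωcube, hωhit⟩ := exists_hitting d n m hm0 δ (le_of_lt hδ0) (by linarith) hcard
    set P₀ : Finset (Fin d → ℝ) := Finset.image ω Finset.univ with hP₀
    obtain ⟨P, hPcard, hPsub, hP₀P⟩ := extend_finset d n hd (by omega) P₀
      (by
        intro z hz
        simp only [hP₀, Finset.coe_image, Set.mem_image] at hz
        obtain ⟨i, -, rfl⟩ := hz
        exact hωcube i)
      (le_trans Finset.card_image_le (by simp))
    refine le_trans (iInf_le _ ⟨P, hPcard, hPsub⟩) ?_
    apply iSup₂_le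
    rintro B ⟨x, y, hx, hy, rfl⟩
    apply iSup_le
    intro hdisj
    rw [volume_periodicBox hx hy]
    apply ENNReal.ofReal_le_ofReal
    by_contra hgt
    push_neg at hgt
    -- now ∏ plen > 2δ
    have hplen1 : ∀ k, plen (x k) (y k) ≤ 1 := fun k => plen_le_one (hx k) (hy k)
    have hplen0 : ∀ k, 0 ≤ plen (x k) (y k) := fun k => plen_nonneg (hx k) (hy k)
    have hk : ∀ k, 2*δ < plen (x k) (y k) := by
      intro k
      have h1 : ∏ j, plen (x j) (y j) = plen (x k) (y k) * ∏ j ∈ Finset.univ.erase k,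
          plen (x j) (y j) := (Finset.mul_prod_erase _ _ (Finset.mem_univ k)).symm
      have h2 : ∏ j ∈ Finset.univ.erase k, plen (x j) (y j) ≤ 1 :=
        Finset.prod_le_one (fun j _ => hplen0 j) (fun j _ => hplen1 j)
      have h3 : plen (x k) (y k) * ∏ j ∈ Finset.univ.erase k, plen (x j) (y j)
          ≤ plen (x k) (y k) * 1 := mul_le_mul_of_nonneg_left h2 (hplen0 k)
      calc 2*δ < ∏ j, plen (x j) (y j) := hgt
      _ ≤ plen (x k) (y k) := by rw [h1]; linarith
    have hlt : ∀ k, 2/(m:ℝ) < plen (x k) (y k) := by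
      intro k
      have : 2/(m:ℝ) ≤ δ := by
        calc 2/(m:ℝ) ≤ 2*(d:ℝ)/m := by gcongr <;> linarith
        _ ≤ δ := hmδ
      calc 2/(m:ℝ) ≤ δ := this
      _ < 2*δ := by linarith
      _ < plen (x k) (y k) := hk k
    have H := fun k => shrink m hm0 (hx k) (hy k) (hlt k)
    choose a b ham hbm hsub hamem hbmem hle hge using H
    set A : Fin d → Fin (m+1) := fun k => ⟨a k, Nat.lt_succ_of_le (ham k)⟩ with hA
    set Bb : Fin d → Fin (m+1) := fun k => ⟨b k, Nat.lt_succ_of_le (hbm k)⟩ with hB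
    have hAa : ∀ k, ((A k : ℕ):ℝ) = (a k : ℝ) := fun k => rfl
    have hBb : ∀ k, ((Bb k : ℕ):ℝ) = (b k : ℝ) := fun k => rfl
    have hvol : ENNReal.ofReal δ ≤ volume (periodicBox (fun k => ((A k : ℕ):ℝ)/m)
        (fun k => ((Bb k : ℕ):ℝ)/m)) := by
      rw [volume_periodicBox (fun k => hamem k) (fun k => hbmem k)]
      apply ENNReal.ofReal_le_ofReal
      have hps := prod_sub_sum_le Finset.univ
        (fun k => plen ((a k:ℝ)/m) ((b k:ℝ)/m)) (fun k => plen (x k) (y k))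
        (fun k _ => plen_nonneg (hamem k) (hbmem k)) (fun k _ => hle k) (fun k _ => hplen1 k)
      have hsum : ∑ k, (plen (x k) (y k) - plen ((a k:ℝ)/m) ((b k:ℝ)/m)) ≤ 2*(d:ℝ)/m := by
        calc ∑ k, (plen (x k) (y k) - plen ((a k:ℝ)/m) ((b k:ℝ)/m))
            ≤ ∑ _k : Fin d, 2/(m:ℝ) := Finset.sum_le_sum (fun k _ => by linarith [hge k])
        _ = d * (2/(m:ℝ)) := by rw [Finset.sum_const, Finset.card_univ, Fintype.card_fin,
              nsmul_eq_mul]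
        _ = 2*(d:ℝ)/m := by ring
      calc δ = 2*δ - δ := by ring
      _ ≤ ∏ k, plen (x k) (y k) - 2*(d:ℝ)/m := by linarith
      _ ≤ ∏ k, plen (x k) (y k) - ∑ k, (plen (x k) (y k) - plen ((a k:ℝ)/m) ((b k:ℝ)/m)) := by
            linarith
      _ ≤ ∏ k, plen ((a k:ℝ)/m) ((b k:ℝ)/m) := hps
    obtain ⟨i, hi⟩ := hωhit A Bb hvol
    have hiB : ω i ∈ periodicBox x y := by
      apply Set.pi_mono (fun k _ => hsub k)
      exact hi
    have hiP : ω i ∈ (↑P : Set (Fin d → ℝ)) := by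
      apply Finset.mem_coe.mpr
      apply hP₀P
      exact Finset.mem_image_of_mem ω (Finset.mem_univ i)
    exact Set.disjoint_left.mp hdisj hiB hiP
end
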